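/- Fix x, g ∈ ℝⁿ, λ > 0, and nonnegative reals a, b, η^g. Let x(λ) = prox_{λh}(x − λg), set G = λ⁻¹(x − x(λ)), and assume the gradient-inexactness condition ‖g − ∇f(x)‖² ≤ (η^g)² + (a²/λ² + b²)‖x(λ) − x‖². Then f(x(λ)) ≤ f(x) + (λ/2)(2a + (2b + 1 + L)λ)‖G‖² + Υ₁(λ)(η^g)² − λ⟨g, G⟩. -/

import Mathlib

open RealInnerProductSpace

theorem descent {n : ℕ} (f : EuclideanSpace ℝ (Fin n) → ℝ)
    (hf : Differentiable ℝ f) (L : ℝ) (hL : 0 ≤ L)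
    (hlip : ∀ u v : EuclideanSpace ℝ (Fin n),
      ‖gradient f u - gradient f v‖ ≤ L * ‖u - v‖)
    (x y : EuclideanSpace ℝ (Fin n)) :
    f y ≤ f x + ⟪gradient f x, y - x⟫ + L / 2 * ‖y - x‖ ^ 2 := by
  set d := y - x with hd
  set ψ : ℝ → ℝ := fun t => f (x + t • d) - t * ⟪gradient f x, d⟫ - L * t ^ 2 / 2 * ‖d‖ ^ 2
    with hψ
  have hderiv : ∀ t : ℝ, HasDerivAt ψ
      (⟪gradient f (x + t • d), d⟫ - ⟪gradient f x, d⟫ - L * t * ‖d‖ ^ 2) t := by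
    intro t
    have h1 : HasDerivAt (fun t : ℝ => x + t • d) d t := by
      simpa using ((hasDerivAt_id t).smul_const d).const_add x
    have h2 : HasFDerivAt f (fderiv ℝ f (x + t • d)) (x + t • d) :=
      (hf (x + t • d)).hasFDerivAt
    have h3 : HasDerivAt (fun t : ℝ => f (x + t • d)) (fderiv ℝ f (x + t • d) d) t :=
      h2.comp_hasDerivAt t h1
    have h4 : fderiv ℝ f (x + t • d) d = ⟪gradient f (x + t • d), d⟫ := by
      have := (hf (x + t • d)).hasGradientAt
      rw [hasGradientAt_iff_hasFDerivAt] at this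
      rw [this.fderiv]
      simp
    rw [h4] at h3
    have h5 : HasDerivAt (fun t : ℝ => t * ⟪gradient f x, d⟫) ⟪gradient f x, d⟫ t := by
      simpa using (hasDerivAt_id t).mul_const (⟪gradient f x, d⟫ : ℝ)
    have h6 : HasDerivAt (fun t : ℝ => L * t ^ 2 / 2 * ‖d‖ ^ 2) (L * t * ‖d‖ ^ 2) t := by
      have : HasDerivAt (fun t : ℝ => t ^ 2) (2 * t) t := by
        simpa using hasDerivAt_pow 2 t
      have := ((this.const_mul L).div_const 2).mul_const (‖d‖ ^ 2)
      exact this.congr_deriv (by ring)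
    exact (h3.sub h5).sub h6
  have hanti : AntitoneOn ψ (Set.Icc 0 1) := by
    apply antitoneOn_of_deriv_nonpos (convex_Icc 0 1)
    · exact (Differentiable.continuous (fun t => (hderiv t).differentiableAt)).continuousOn
    · intro t ht
      exact ((hderiv t).differentiableAt).differentiableWithinAt
    · intro t ht
      rw [interior_Icc] at ht
      rw [(hderiv t).deriv]
      have hb1 : ⟪gradient f (x + t • d) - gradient f x, d⟫ ≤ L * t * ‖d‖ ^ 2 := by
        calc ⟪gradient f (x + t • d) - gradient f x, d⟫
            ≤ ‖gradient f (x + t • d) - gradient f x‖ * ‖d‖ := real_inner_le_norm _ _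
          _ ≤ (L * ‖(x + t • d) - x‖) * ‖d‖ := by
              gcongr; exact hlip _ _
          _ = L * t * ‖d‖ ^ 2 := by
              have : ‖(x + t • d) - x‖ = |t| * ‖d‖ := by
                simp [norm_smul, abs_eq_self.mpr, Real.norm_eq_abs]
              rw [this, abs_of_pos ht.1]; ring
      have := inner_sub_left (𝕜 := ℝ) (gradient f (x + t • d)) (gradient f x) d
      linarith [hb1, this.symm]
  have h01 : ψ 1 ≤ ψ 0 := hanti (by norm_num) (by norm_num) (by norm_num)
  have hy : x + d = y := by rw [hd]; abel
  have e1 : ψ 0 = f x := by simp [hψ]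
  have e0 : ψ 1 = f y - ⟪gradient f x, d⟫ - L / 2 * ‖d‖ ^ 2 := by
    simp only [hψ, one_smul, one_pow, mul_one, one_mul, hy]

  rw [e0, e1] at h01
  linarith

/-- `Υ₁(λ)`: the error-weighting constant from the paper. -/
noncomputable def Ups1 (a b lam : ℝ) : ℝ :=
  if a = 0 ∧ b = 0 then 1 / 2
  else if b = 0 then lam / (2 * a)
  else if a = 0 then 1 / (2 * b)
  else min (lam / (2 * a)) (1 / (2 * b))

set_option maxHeartbeats 1000000 in
/-- descent-type inequality under the gradient-inexactness condition. -/
theorem stmt2 {n : ℕ}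
    (f h : EuclideanSpace ℝ (Fin n) → ℝ)
    (hconv : ConvexOn ℝ Set.univ h)
    (hf : Differentiable ℝ f)
    (L : ℝ) (hL : 0 < L)
    (hlip : ∀ u v : EuclideanSpace ℝ (Fin n),
      ‖gradient f u - gradient f v‖ ≤ L * ‖u - v‖)
    (prox : ℝ → EuclideanSpace ℝ (Fin n) → EuclideanSpace ℝ (Fin n))
    (hprox : ∀ lam : ℝ, 0 < lam → ∀ u y : EuclideanSpace ℝ (Fin n),
      1 / (2 * lam) * ‖prox lam u - u‖ ^ 2 + h (prox lam u)
        ≤ 1 / (2 * lam) * ‖y - u‖ ^ 2 + h y)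
    (a b ηg : ℝ) (ha : 0 ≤ a) (hb : 0 ≤ b) (hηg : 0 ≤ ηg)
    (lam : ℝ) (hlam : 0 < lam)
    (x g : EuclideanSpace ℝ (Fin n))
    (xlam : EuclideanSpace ℝ (Fin n)) (hxlam : xlam = prox lam (x - lam • g))
    (G : EuclideanSpace ℝ (Fin n)) (hG : G = lam⁻¹ • (x - xlam))
    (hgrad : ‖g - gradient f x‖ ^ 2
      ≤ ηg ^ 2 + (a ^ 2 / lam ^ 2 + b ^ 2) * ‖xlam - x‖ ^ 2) :
    f xlam ≤ f x + lam / 2 * (2 * a + (2 * b + 1 + L) * lam) * ‖G‖ ^ 2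
      + Ups1 a b lam * ηg ^ 2 - lam * ⟪g, G⟫ := by
  have hdesc := descent f hf L hL.le hlip x xlam
  set d : EuclideanSpace ℝ (Fin n) := xlam - x with hd
  -- relation between d and G
  have hdG : d = -(lam • G) := by
    rw [hG, hd, smul_smul, mul_inv_cancel₀ hlam.ne', one_smul]; abel
  have hnd : ‖d‖ = lam * ‖G‖ := by
    rw [hdG, norm_neg, norm_smul, Real.norm_eq_abs, abs_of_pos hlam]
  have hgd : ⟪g, d⟫ = -(lam * ⟪g, G⟫) := by
    rw [hdG, inner_neg_right, real_inner_smul_right]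
  -- scalar abbreviations
  set δ : ℝ := ‖d‖ with hδ
  set E : ℝ := ‖g - gradient f x‖ with hE
  have hδ0 : 0 ≤ δ := norm_nonneg _
  have hE0 : 0 ≤ E := norm_nonneg _
  set α : ℝ := a / lam with hα
  have hα0 : 0 ≤ α := div_nonneg ha hlam.le
  set c : ℝ := max (max α b) 1 with hc
  have hc1 : (1:ℝ) ≤ c := le_max_right _ _
  have hcα : α ≤ c := le_trans (le_max_left _ _) (le_max_left _ _)
  have hcb : b ≤ c := le_trans (le_max_right _ _) (le_max_left _ _)
  have hc0 : (0:ℝ) < c := lt_of_lt_of_le one_pos hc1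
  -- the gradient error bound, in α form
  have hαsq : a ^ 2 / lam ^ 2 = α ^ 2 := by
    rw [hα]; field_simp
  have hEsq : E ^ 2 ≤ ηg ^ 2 + (α ^ 2 + b ^ 2) * δ ^ 2 := by
    rw [← hαsq]; exact hgrad
  -- inner product step
  have hip : ⟪gradient f x, d⟫ ≤ ⟪g, d⟫ + E * δ := by
    have h1 : ⟪gradient f x - g, d⟫ ≤ E * δ := by
      calc ⟪gradient f x - g, d⟫ ≤ ‖gradient f x - g‖ * ‖d‖ := real_inner_le_norm _ _
        _ = E * δ := by rw [norm_sub_rev]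
    have h2 := inner_sub_left (𝕜 := ℝ) (gradient f x) g d
    linarith [h1, h2.symm.le, h2.le]
  -- AM-GM
  have hamgm : E * δ ≤ E ^ 2 / (2 * c) + c / 2 * δ ^ 2 := by
    have hsq := sq_nonneg (E - c * δ)
    rw [← sub_nonneg]
    have : E ^ 2 / (2 * c) + c / 2 * δ ^ 2 - E * δ = (E - c * δ) ^ 2 / (2 * c) := by
      field_simp; ring
    rw [this]
    positivity
  -- 1/(2c) ≤ Ups1
  have hups : 1 / (2 * c) ≤ Ups1 a b lam := by
    unfold Ups1
    split_ifs with h1 h2 h3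
    · exact one_div_le_one_div_of_le two_pos (by linarith)
    · have ha' : 0 < a := lt_of_le_of_ne ha (fun hh => h1 ⟨hh.symm, h2⟩)
      have hα' : 0 < α := by rw [hα]; positivity
      have heq : lam / (2 * a) = 1 / (2 * α) := by rw [hα]; field_simp
      rw [heq]
      exact one_div_le_one_div_of_le (by positivity) (by linarith)
    · have hb' : 0 < b := lt_of_le_of_ne hb (Ne.symm h2)
      exact one_div_le_one_div_of_le (by positivity) (by linarith)
    · have ha' : 0 < a := lt_of_le_of_ne ha (Ne.symm h3)
      have hb' : 0 < b := lt_of_le_of_ne hb (Ne.symm h2)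
      have hα' : 0 < α := by rw [hα]; positivity
      have heq : lam / (2 * a) = 1 / (2 * α) := by rw [hα]; field_simp
      rw [heq]
      refine le_min ?_ ?_
      · exact one_div_le_one_div_of_le (by positivity) (by linarith)
      · exact one_div_le_one_div_of_le (by positivity) (by linarith)
  -- coefficient bound
  have hcoef : (α ^ 2 + b ^ 2) / (2 * c) + c / 2 ≤ α + b + 1 / 2 := by
    have hcsum : c ≤ α + b + 1 := max_le (max_le (by linarith) (by linarith)) (by linarith)
    rw [div_add' _ _ _ (by positivity), div_le_iff₀ (by positivity)]
    nlinarith [mul_le_mul_of_nonneg_left hcα hα0, mul_le_mul_of_nonneg_left hcb hb,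
      mul_le_mul_of_nonneg_left hcsum hc0.le]
  -- put it together
  have hEδ : E * δ ≤ Ups1 a b lam * ηg ^ 2 + ((α ^ 2 + b ^ 2) / (2 * c) + c / 2) * δ ^ 2 := by
    have h1 : E ^ 2 / (2 * c) ≤ ηg ^ 2 / (2 * c) + (α ^ 2 + b ^ 2) * δ ^ 2 / (2 * c) := by
      rw [← add_div]
      exact div_le_div_of_nonneg_right hEsq (by positivity)
    have h2 : ηg ^ 2 / (2 * c) ≤ Ups1 a b lam * ηg ^ 2 := by
      calc ηg ^ 2 / (2 * c) = 1 / (2 * c) * ηg ^ 2 := by ring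
        _ ≤ Ups1 a b lam * ηg ^ 2 := by
            apply mul_le_mul_of_nonneg_right hups (by positivity)
    have h3 : (α ^ 2 + b ^ 2) * δ ^ 2 / (2 * c) = (α ^ 2 + b ^ 2) / (2 * c) * δ ^ 2 := by
      ring
    linarith [hamgm, h1, h2, h3]
  have hδG : δ ^ 2 = lam ^ 2 * ‖G‖ ^ 2 := by rw [hnd]; ring
  have hfin : ((α ^ 2 + b ^ 2) / (2 * c) + c / 2) * δ ^ 2 + L / 2 * δ ^ 2
      ≤ lam / 2 * (2 * a + (2 * b + 1 + L) * lam) * ‖G‖ ^ 2 := by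
    have hpow : 0 ≤ δ ^ 2 := sq_nonneg _
    have step : ((α ^ 2 + b ^ 2) / (2 * c) + c / 2) * δ ^ 2 + L / 2 * δ ^ 2
        ≤ (α + b + 1 / 2 + L / 2) * δ ^ 2 := by nlinarith [hcoef]
    refine step.trans (le_of_eq ?_)
    rw [hδG, hα]
    field_simp
    ring
  rw [hgd] at hip
  linarith [hdesc, hip, hEδ, hfin]
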